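/- Let F₀ be the space of complex polynomials and F₁ ⋊_α sl₂ the Lie algebra with underlying space F₁ ⊕ sl₂(ℂ) and bracket [(a,y),(b,z)] = (y▷b − z▷a + α(y,z), [y,z]), where α(k,e) = −α(e,k) = dx and α vanishes on other basis pairs. Then: (1) this bracket satisfies the Jacobi identity (i.e., α is a 2-cocycle for the sl₂-action on F₁); (2) the map ∂ : F₀ → F₁ ⋊_α sl₂, ∂(p) = (dp, 0), together with the action (a,y) ▷ p = y ▷ p, defines a differential crossed module (the String differential crossed module); (3) ker(∂) = ℂ·1 is invariant under the action of F₁ ⋊_α sl₂. -/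

import Mathlib

open Polynomial

namespace Stmt13

/-- The embedding `sl₂(ℂ) → W₁`, `f ↦ d/dx`, `k ↦ x d/dx`, `e ↦ x² d/dx`
(on the matrix model of `sl₂(ℂ)`), identifying `p(x) d/dx` with `p`. -/
noncomputable def m (A : Matrix (Fin 2) (Fin 2) ℂ) : Polynomial ℂ :=
  C (-(A 0 1)) + C (2 * A 1 1) * X + C (A 1 0) * X ^ 2

/-- The action of `sl₂ ⊂ W₁` on `F₀` (polynomials): `(p d/dx) ▷ q = p q'`. -/
noncomputable def actF0 (A : Matrix (Fin 2) (Fin 2) ℂ) (q : Polynomial ℂ) :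
    Polynomial ℂ := m A * derivative q

/-- The action of `sl₂ ⊂ W₁` on `F₁` (polynomial 1-forms, `q dx ↔ q`):
`(p d/dx) ▷ (q dx) = (p q' + p' q) dx`. -/
noncomputable def actF1 (A : Matrix (Fin 2) (Fin 2) ℂ) (q : Polynomial ℂ) :
    Polynomial ℂ := m A * derivative q + derivative (m A) * q

/-- The restriction to `sl₂` of the 2-cocycle `ᾱ`, satisfying
`α(k,e) = −α(e,k) = dx` and vanishing on the other basis pairs. -/
noncomputable def alpha (A B : Matrix (Fin 2) (Fin 2) ℂ) : Polynomial ℂ :=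
  ((1 : ℂ)/2) • (derivative (m A) * derivative (derivative (m B))
    - derivative (derivative (m A)) * derivative (m B))

/-- The bracket of `F₁ ⋊_α sl₂` (underlying space `F₁ ⊕ sl₂`):
`[(a,y),(b,z)] = (y▷b − z▷a + α(y,z), [y,z])`. -/
noncomputable def br (p q : Polynomial ℂ × Matrix (Fin 2) (Fin 2) ℂ) :
    Polynomial ℂ × Matrix (Fin 2) (Fin 2) ℂ :=
  (actF1 p.2 q.1 - actF1 q.2 p.1 + alpha p.2 q.2, ⁅p.2, q.2⁆)

/-- The map `∂ : F₀ → F₁ ⋊_α sl₂`, `∂(p) = (dp, 0)`. -/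
noncomputable def dd (p : Polynomial ℂ) :
    Polynomial ℂ × Matrix (Fin 2) (Fin 2) ℂ := (derivative p, 0)

/-- The action of `F₁ ⋊_α sl₂` on `F₀`: `(a,y) ▷ p = y ▷ p`. -/
noncomputable def actE (a : Polynomial ℂ × Matrix (Fin 2) (Fin 2) ℂ)
    (p : Polynomial ℂ) : Polynomial ℂ := actF0 a.2 p

lemma d2 (A : Matrix (Fin 2) (Fin 2) ℂ) :
    derivative (derivative (m A)) = C (2 * A 1 0) := by
  simp [m]; have h2 : (C (2:ℂ)) = 2 := map_ofNat C 2; simp only [C_mul, h2]; ring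

lemma m0 : m 0 = 0 := by simp [m]

lemma mbr (A B : Matrix (Fin 2) (Fin 2) ℂ) (hA : A.trace = 0) (hB : B.trace = 0) :
    m ⁅A, B⁆ = m A * derivative (m B) - derivative (m A) * m B := by
  simp [Matrix.trace, Fin.sum_univ_two] at hA hB
  have hA' : A 0 0 = -A 1 1 := by linear_combination hA
  have hB' : B 0 0 = -B 1 1 := by linear_combination hB
  have h2 : (C (2:ℂ)) = 2 := map_ofNat C 2
  simp [Ring.lie_def, m, Matrix.sub_apply, Matrix.mul_apply, Fin.sum_univ_two, hA', hB', h2]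
  ring

/-- The String differential crossed module `∂ : F₀ → F₁ ⋊_α sl₂`:
(1) the bracket of `F₁ ⋊_α sl₂` satisfies the Jacobi identity;
(2) `∂(p) = (dp, 0)` with the action `(a,y) ▷ p = y ▷ p` is a differential
crossed module (equivariance of `∂` and the Peiffer relation, the latter
trivial since `F₀` is abelian);
(3) `ker ∂ = ℂ·1` and it is invariant under the action of `F₁ ⋊_α sl₂`. -/
theorem string_differential_crossed_module :
    -- (1) Jacobi identity:
    (∀ p q r : Polynomial ℂ × Matrix (Fin 2) (Fin 2) ℂ,
      p.2.trace = 0 → q.2.trace = 0 → r.2.trace = 0 →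
      br p (br q r) + br q (br r p) + br r (br p q) = 0) ∧
    -- (2) equivariance of `∂` ...
    (∀ (a : Polynomial ℂ × Matrix (Fin 2) (Fin 2) ℂ) (p : Polynomial ℂ),
      a.2.trace = 0 → dd (actE a p) = br a (dd p)) ∧
    -- ... and the Peiffer relation (`F₀` abelian):
    (∀ p q : Polynomial ℂ, actE (dd p) q = 0) ∧
    -- (3) `ker ∂ = ℂ·1` ...
    (∀ p : Polynomial ℂ, derivative p = 0 ↔ ∃ c : ℂ, p = C c) ∧
    -- ... is invariant under the action:
    (∀ (a : Polynomial ℂ × Matrix (Fin 2) (Fin 2) ℂ) (p : Polynomial ℂ),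
      a.2.trace = 0 → derivative p = 0 → derivative (actE a p) = 0) := by
  refine ⟨?_, ?_, ?_, ?_, ?_⟩
  · intro p q r hp hq hr
    have j2 : ⁅p.2, ⁅q.2, r.2⁆⁆ + ⁅q.2, ⁅r.2, p.2⁆⁆ + ⁅r.2, ⁅p.2, q.2⁆⁆ = 0 := by
      simp only [Ring.lie_def]; noncomm_ring
    refine Prod.ext ?_ j2
    simp only [br, actF1, alpha, mbr _ _ hp hq, mbr _ _ hq hr, mbr _ _ hr hp,
      smul_eq_C_mul, derivative_mul, derivative_add, derivative_sub, d2,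
      derivative_C, Prod.fst_add, Prod.fst_zero]
    ring
  · intro a p _
    refine Prod.ext ?_ (by simp [dd, br, Ring.lie_def])
    simp only [dd, actE, actF0, br, actF1, alpha, m0, derivative_mul, derivative_zero,
      derivative_sub, mul_zero, zero_mul, sub_self, sub_zero, smul_zero]
    ring
  · intro p q
    simp [actE, dd, actF0, m0]
  · intro p
    constructor
    · intro h
      exact ⟨p.coeff 0, (Polynomial.eq_C_of_natDegree_eq_zero
        (Polynomial.natDegree_eq_zero_of_derivative_eq_zero h))⟩
    · rintro ⟨c, rfl⟩; simp
  · intro a p _ h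
    simp [actE, actF0, h]

end Stmt13
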